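/- arXiv:2404.08290 — 3 statements merged into one kernel-verified Lean document; each statement's English description precedes it below -/
import Mathlib

section
/- Let T > 0, δ > 0, let u : [0,T] → [0,δ] be a piecewise constant function, let a > δ, and fix an integer k ≥ 1. For h = 0, …, k−1 set I_h = [hT/k, (h+1)T/k) and U_h = ∫_{I_h} u(s) ds, and define w : [0,T) → ℝ by w(t) = a if t ∈ [(h+1)T/k − U_h/a, (h+1)T/k) for some h, and w(t) = 0 otherwise. Then w is well defined and takes values in {0,a} (i.e. U_h/a ≤ T/k for every h), ∫_{I_h} w(s) ds = U_h for every h = 0, …, k−1, ∫_0^T |w(s)| ds ≤ ∫_0^T |u(s)| ds, and |∫_0^t w(s) ds − ∫_0^t u(s) ds| ≤ (δ + a) T / k for every t ∈ [0,T]. -/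
open scoped Classical

open MeasureTheory Set intervalIntegral

/-- A function `f` is piecewise constant on `[0,T]` if there is a finite partition
`0 = t_0 < t_1 < … < t_m = T` such that `f` is constant on each interval `[t_{j-1}, t_j)`. -/
def PiecewiseConstOn (f : ℝ → ℝ) (T : ℝ) : Prop :=
  ∃ (m : ℕ) (t : ℕ → ℝ), 0 < m ∧ t 0 = 0 ∧ t m = T ∧
    (∀ j < m, t j < t (j + 1)) ∧
    ∀ j < m, ∀ x ∈ Set.Ico (t j) (t (j + 1)), f x = f (t j)

lemma pcw_intervalIntegrable {f : ℝ → ℝ} {T : ℝ} (hT : 0 ≤ T) (hf : PiecewiseConstOn f T)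
    {x y : ℝ} (hx : x ∈ Set.Icc (0:ℝ) T) (hy : y ∈ Set.Icc (0:ℝ) T) :
    IntervalIntegrable f MeasureTheory.volume x y := by
  obtain ⟨m, t, hm, ht0, htm, hlt, hconst⟩ := hf
  have h0T : IntervalIntegrable f volume (t 0) (t m) := by
    apply IntervalIntegrable.trans_iterate
    intro j hj
    have hle : t j ≤ t (j + 1) := (hlt j hj).le
    have hne : ∀ᵐ s ∂(volume : Measure ℝ), s ≠ t (j + 1) := by
      rw [MeasureTheory.ae_iff]
      simpa using Real.volume_singleton (a := t (j + 1))
    have heq : (fun _ : ℝ => f (t j)) =ᵐ[volume.restrict (Set.uIoc (t j) (t (j+1)))] f := by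
      rw [Set.uIoc_of_le hle]
      filter_upwards [MeasureTheory.ae_restrict_mem measurableSet_Ioc,
        (MeasureTheory.ae_restrict_of_ae hne)] with s hs hsne
      exact (hconst j hj s ⟨hs.1.le, lt_of_le_of_ne hs.2 hsne⟩).symm
    exact (_root_.intervalIntegrable_const).congr_ae heq
  rw [ht0, htm] at h0T
  exact h0T.mono_set (by
    rw [Set.uIcc_of_le hT]
    exact Set.uIcc_subset_Icc hx hy)

/-- explicit bang-bang approximation on a uniform partition into `k` pieces. -/
theorem bang_bang_explicit
    (T δ a : ℝ) (hT : 0 < T) (hδ : 0 < δ) (ha : δ < a)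
    (u : ℝ → ℝ) (hu : PiecewiseConstOn u T)
    (hurange : ∀ t ∈ Set.Icc (0 : ℝ) T, u t ∈ Set.Icc (0 : ℝ) δ)
    (k : ℕ) (hk : 1 ≤ k)
    (U : ℕ → ℝ)
    (hU : ∀ h : ℕ, U h = ∫ s in ((h : ℝ) * T / k)..(((h : ℝ) + 1) * T / k), u s)
    (w : ℝ → ℝ)
    (hw : ∀ t : ℝ, w t =
      if ∃ h : ℕ, h < k ∧ ((h : ℝ) + 1) * T / k - U h / a ≤ t ∧ t < ((h : ℝ) + 1) * T / k
      then a else 0) :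
    (∀ h : ℕ, h < k → U h / a ≤ T / k) ∧
    (∀ t : ℝ, w t ∈ ({0, a} : Set ℝ)) ∧
    (∀ h : ℕ, h < k → (∫ s in ((h : ℝ) * T / k)..(((h : ℝ) + 1) * T / k), w s) = U h) ∧
    ((∫ s in (0 : ℝ)..T, |w s|) ≤ ∫ s in (0 : ℝ)..T, |u s|) ∧
    (∀ t ∈ Set.Icc (0 : ℝ) T,
      |(∫ s in (0 : ℝ)..t, w s) - ∫ s in (0 : ℝ)..t, u s| ≤ (δ + a) * T / k) := by
  have ha0 : 0 < a := hδ.trans ha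
  have hk0 : (0:ℝ) < (k:ℝ) := by exact_mod_cast hk
  have hTk : 0 < T / k := div_pos hT hk0
  set lo : ℕ → ℝ := fun h => (h : ℝ) * T / k with hlo
  set b : ℕ → ℝ := fun h => ((h : ℝ) + 1) * T / k with hb
  set c : ℕ → ℝ := fun h => b h - U h / a with hc
  have hlob : ∀ h, b h = lo (h + 1) := by
    intro h; simp only [hlo, hb]; push_cast; ring
  have hbstep : ∀ h, b h = lo h + T / k := by
    intro h; simp only [hlo, hb]; field_simp
  have hlo_mono : ∀ {i j : ℕ}, i ≤ j → lo i ≤ lo j := by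
    intro i j hij
    have hij' : (i:ℝ) ≤ j := by exact_mod_cast hij
    simp only [hlo]
    gcongr
  have hlolt : ∀ h, lo h < b h := fun h => by rw [hbstep h]; linarith
  have hlo0 : lo 0 = 0 := by simp [hlo]
  have hlok : lo k = T := by
    simp only [hlo]; field_simp
  have hloIcc : ∀ {h : ℕ}, h ≤ k → lo h ∈ Set.Icc (0:ℝ) T := by
    intro h hh
    constructor
    · rw [← hlo0]; exact hlo_mono (Nat.zero_le _)
    · rw [← hlok]; exact hlo_mono hh
  have hbIcc : ∀ {h : ℕ}, h < k → b h ∈ Set.Icc (0:ℝ) T := by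
    intro h hh; rw [hlob]; exact hloIcc hh
  -- integrability of u
  have huint : ∀ {x y : ℝ}, x ∈ Set.Icc (0:ℝ) T → y ∈ Set.Icc (0:ℝ) T →
      IntervalIntegrable u volume x y := fun hx hy => pcw_intervalIntegrable hT.le hu hx hy
  -- bounds on U h
  have hUbounds : ∀ h : ℕ, h < k → 0 ≤ U h ∧ U h ≤ δ * (T / k) := by
    intro h hh
    have hint : IntervalIntegrable u volume (lo h) (b h) := huint (hloIcc hh.le) (hbIcc hh)
    constructor
    · rw [hU h]
      apply intervalIntegral.integral_nonneg (hlolt h).le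
      intro s hs
      have hsT : s ∈ Set.Icc (0:ℝ) T :=
        ⟨le_trans (hloIcc hh.le).1 hs.1, le_trans hs.2 (hbIcc hh).2⟩
      exact (hurange s hsT).1
    · rw [hU h]
      calc (∫ s in lo h..b h, u s) ≤ ∫ _ in lo h..b h, δ := by
            apply intervalIntegral.integral_mono_on (hlolt h).le hint intervalIntegrable_const
            intro s hs
            have hsT : s ∈ Set.Icc (0:ℝ) T :=
              ⟨le_trans (hloIcc hh.le).1 hs.1, le_trans hs.2 (hbIcc hh).2⟩
            exact (hurange s hsT).2
        _ = δ * (T / k) := by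
            rw [intervalIntegral.integral_const, smul_eq_mul, hbstep h]
            ring
  have hUlt : ∀ h : ℕ, h < k → U h / a < T / k := by
    intro h hh
    rw [div_lt_iff₀ ha0]
    calc U h ≤ δ * (T / k) := (hUbounds h hh).2
      _ < a * (T / k) := mul_lt_mul_of_pos_right ha hTk
      _ = T / k * a := mul_comm _ _
  have part1 : ∀ h : ℕ, h < k → U h / a ≤ T / k := fun h hh => (hUlt h hh).le
  -- structure of c
  have hcmem : ∀ h : ℕ, h < k → lo h < c h ∧ c h ≤ b h := by
    intro h hh
    constructor
    · have h1 := hUlt h hh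
      have h2 := hbstep h
      simp only [hc]; linarith
    · have : 0 ≤ U h / a := div_nonneg (hUbounds h hh).1 ha0.le
      simp only [hc]; linarith
  -- w as an indicator function
  set S : Set ℝ := ⋃ h ∈ Finset.range k, Set.Ico (c h) (b h) with hS
  have hSmeas : MeasurableSet S :=
    Finset.measurableSet_biUnion _ (fun h _ => measurableSet_Ico)
  have hwind : ∀ t : ℝ, w t = S.indicator (fun _ => a) t := by
    intro t
    rw [hw t]
    by_cases hmem : t ∈ S
    · have hex : ∃ h : ℕ, h < k ∧ ((h : ℝ) + 1) * T / k - U h / a ≤ t ∧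
          t < ((h : ℝ) + 1) * T / k := by
        simp only [hS, Set.mem_iUnion, Finset.mem_range, Set.mem_Ico] at hmem
        obtain ⟨h, hh, h1, h2⟩ := hmem
        exact ⟨h, hh, h1, h2⟩
      rw [if_pos hex, Set.indicator_of_mem hmem]
    · have hnex : ¬ ∃ h : ℕ, h < k ∧ ((h : ℝ) + 1) * T / k - U h / a ≤ t ∧
          t < ((h : ℝ) + 1) * T / k := by
        rintro ⟨h, hh, h1, h2⟩
        apply hmem
        simp only [hS, Set.mem_iUnion, Finset.mem_range, Set.mem_Ico]
        exact ⟨h, hh, h1, h2⟩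
      rw [if_neg hnex, Set.indicator_of_notMem hmem]
  -- part 2
  have part2 : ∀ t : ℝ, w t ∈ ({0, a} : Set ℝ) := by
    intro t
    rw [hwind t]
    by_cases hmem : t ∈ S
    · right; rw [Set.indicator_of_mem hmem]; exact Set.mem_singleton _
    · left; rw [Set.indicator_of_notMem hmem]
  have hw_nonneg : ∀ s, 0 ≤ w s := by
    intro s; rcases part2 s with h0 | h0 <;> rw [h0]
    · exact ha0.le
  have hw_le : ∀ s, w s ≤ a := by
    intro s; rcases part2 s with h0 | h0 <;> rw [h0]
    · exact ha0.le
  -- integrability of w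
  have hwint : ∀ x y : ℝ, IntervalIntegrable w volume x y := by
    intro x y
    have hind : IntervalIntegrable (S.indicator fun _ => a) volume x y := by
      constructor
      · exact (MeasureTheory.integrableOn_const measure_Ioc_lt_top.ne).indicator hSmeas
      · exact (MeasureTheory.integrableOn_const measure_Ioc_lt_top.ne).indicator hSmeas
    exact hind.congr_ae (Filter.Eventually.of_forall fun s => (hwind s).symm)
  -- pointwise description of w on each block
  have hwon : ∀ h : ℕ, h < k → ∀ s ∈ Set.Ico (lo h) (b h),
      w s = (Set.Ico (c h) (b h)).indicator (fun _ => a) s := by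
    intro h hh s hs
    rw [hwind s]
    by_cases hcs : s ∈ Set.Ico (c h) (b h)
    · rw [Set.indicator_of_mem hcs, Set.indicator_of_mem]
      simp only [hS, Set.mem_iUnion, Finset.mem_range, Set.mem_Ico]
      exact ⟨h, hh, hcs.1, hcs.2⟩
    · rw [Set.indicator_of_notMem hcs, Set.indicator_of_notMem]
      intro hsS
      simp only [hS, Set.mem_iUnion, Finset.mem_range, Set.mem_Ico] at hsS
      obtain ⟨h', hh', h1, h2⟩ := hsS
      rcases lt_trichotomy h' h with hlt' | heq | hgt
      · have hble : b h' ≤ lo h := by rw [hlob]; exact hlo_mono hlt'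
        have := hs.1
        linarith
      · subst heq
        exact hcs ⟨h1, h2⟩
      · have hble : b h ≤ lo h' := by rw [hlob]; exact hlo_mono hgt
        have := (hcmem h' hh').1
        have := hs.2
        linarith
  -- part 3
  have part3 : ∀ h : ℕ, h < k → (∫ s in lo h..b h, w s) = U h := by
    intro h hh
    rw [intervalIntegral.integral_of_le (hlolt h).le,
      MeasureTheory.integral_Ioc_eq_integral_Ioo,
      MeasureTheory.setIntegral_congr_fun measurableSet_Ioo
        (fun s hs => hwon h hh s ⟨hs.1.le, hs.2⟩),
      MeasureTheory.setIntegral_indicator measurableSet_Ico]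
    have hinter : Set.Ioo (lo h) (b h) ∩ Set.Ico (c h) (b h) = Set.Ico (c h) (b h) := by
      apply Set.inter_eq_self_of_subset_right
      intro s hs
      exact ⟨lt_of_lt_of_le (hcmem h hh).1 hs.1, hs.2⟩
    rw [hinter, MeasureTheory.setIntegral_const, measureReal_def, Real.volume_Ico, smul_eq_mul]
    have hbc : b h - c h = U h / a := by simp only [hc]; ring
    rw [hbc, ENNReal.toReal_ofReal (div_nonneg (hUbounds h hh).1 ha0.le)]
    field_simp
  -- prefix equality
  have prefixEq : ∀ h : ℕ, h ≤ k → (∫ s in (0:ℝ)..lo h, w s) = ∫ s in (0:ℝ)..lo h, u s := by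
    intro h hh
    have h1 : ∑ i ∈ Finset.range h, ∫ s in lo i..lo (i+1), w s = ∫ s in (lo 0)..(lo h), w s :=
      intervalIntegral.sum_integral_adjacent_intervals (fun i _ => hwint _ _)
    have h2 : ∑ i ∈ Finset.range h, ∫ s in lo i..lo (i+1), u s = ∫ s in (lo 0)..(lo h), u s := by
      apply intervalIntegral.sum_integral_adjacent_intervals
      intro i hi
      have hik : i + 1 ≤ k := le_trans (Nat.succ_le_of_lt hi) hh
      exact huint (hloIcc (le_trans (Nat.le_succ i) hik)) (hloIcc hik)
    rw [hlo0] at h1 h2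
    rw [← h1, ← h2]
    apply Finset.sum_congr rfl
    intro i hi
    rw [Finset.mem_range] at hi
    have hik : i < k := lt_of_lt_of_le hi hh
    rw [← hlob i, part3 i hik, hU i]
  -- part 4
  have part4 : (∫ s in (0 : ℝ)..T, |w s|) ≤ ∫ s in (0 : ℝ)..T, |u s| := by
    have e1 : (∫ s in (0:ℝ)..T, |w s|) = ∫ s in (0:ℝ)..T, w s :=
      intervalIntegral.integral_congr (fun s _ => abs_of_nonneg (hw_nonneg s))
    have e2 : (∫ s in (0:ℝ)..T, |u s|) = ∫ s in (0:ℝ)..T, u s := by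
      apply intervalIntegral.integral_congr
      intro s hs
      rw [Set.uIcc_of_le hT.le] at hs
      exact abs_of_nonneg (hurange s hs).1
    rw [e1, e2, ← hlok]
    exact (prefixEq k le_rfl).le
  -- part 5
  have part5 : ∀ t ∈ Set.Icc (0:ℝ) T,
      |(∫ s in (0:ℝ)..t, w s) - ∫ s in (0:ℝ)..t, u s| ≤ (δ + a) * T / k := by
    intro t ht
    rcases eq_or_lt_of_le ht.2 with hteq | htlt
    · rw [hteq, ← hlok, prefixEq k le_rfl, sub_self, abs_zero]
      positivity
    · set h : ℕ := (⌊t * k / T⌋).toNat with hhdef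
      have htk0 : 0 ≤ t * k / T := div_nonneg (mul_nonneg ht.1 hk0.le) hT.le
      have hcast : ((h:ℕ):ℝ) = ((⌊t * k / T⌋ : ℤ) : ℝ) := by
        rw [hhdef]
        norm_cast
        exact Int.toNat_of_nonneg (Int.floor_nonneg.2 htk0)
      have hfl : (h:ℝ) ≤ t * k / T := by rw [hcast]; exact Int.floor_le _
      have hfl2 : t * k / T < (h:ℝ) + 1 := by
        rw [hcast]
        have h9 := Int.lt_floor_add_one (t * k / T)
        push_cast at h9 ⊢
        linarith
      have hhk : h < k := by
        have h1 : t * k / T < k := by rw [div_lt_iff₀ hT]; nlinarith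
        have h2 : (h:ℝ) < k := lt_of_le_of_lt hfl h1
        exact_mod_cast h2
      have hlot : lo h ≤ t := by
        simp only [hlo]
        rw [div_le_iff₀ hk0]
        rw [le_div_iff₀ hT] at hfl
        linarith
      have htb : t < b h := by
        simp only [hb]
        rw [lt_div_iff₀ hk0]
        rw [div_lt_iff₀ hT] at hfl2
        linarith
      have hsplit_w : (∫ s in (0:ℝ)..t, w s)
          = (∫ s in (0:ℝ)..lo h, w s) + ∫ s in lo h..t, w s :=
        (intervalIntegral.integral_add_adjacent_intervals (hwint _ _) (hwint _ _)).symm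
      have hsplit_u : (∫ s in (0:ℝ)..t, u s)
          = (∫ s in (0:ℝ)..lo h, u s) + ∫ s in lo h..t, u s :=
        (intervalIntegral.integral_add_adjacent_intervals
          (huint ⟨le_rfl, hT.le⟩ (hloIcc hhk.le)) (huint (hloIcc hhk.le) ht)).symm
      have hL : t - lo h ≤ T / k := by
        have := hbstep h; linarith
      have hL0 : 0 ≤ t - lo h := by linarith
      have hw_lb : 0 ≤ ∫ s in lo h..t, w s :=
        intervalIntegral.integral_nonneg hlot (fun s _ => hw_nonneg s)
      have hw_ub : (∫ s in lo h..t, w s) ≤ a * (T / k) := by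
        calc (∫ s in lo h..t, w s) ≤ ∫ _ in lo h..t, a :=
              intervalIntegral.integral_mono_on hlot (hwint _ _) intervalIntegrable_const
                (fun s _ => hw_le s)
          _ = a * (t - lo h) := by rw [intervalIntegral.integral_const, smul_eq_mul]; ring
          _ ≤ a * (T / k) := mul_le_mul_of_nonneg_left hL ha0.le
      have hmemIcc : ∀ s ∈ Set.Icc (lo h) t, s ∈ Set.Icc (0:ℝ) T :=
        fun s hs => ⟨le_trans (hloIcc hhk.le).1 hs.1, le_trans hs.2 ht.2⟩
      have hu_lb : 0 ≤ ∫ s in lo h..t, u s :=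
        intervalIntegral.integral_nonneg hlot (fun s hs => (hurange s (hmemIcc s hs)).1)
      have hu_ub : (∫ s in lo h..t, u s) ≤ δ * (T / k) := by
        calc (∫ s in lo h..t, u s) ≤ ∫ _ in lo h..t, δ :=
              intervalIntegral.integral_mono_on hlot
                (huint (hloIcc hhk.le) ht) intervalIntegrable_const
                (fun s hs => (hurange s (hmemIcc s hs)).2)
          _ = δ * (t - lo h) := by rw [intervalIntegral.integral_const, smul_eq_mul]; ring
          _ ≤ δ * (T / k) := mul_le_mul_of_nonneg_left hL hδ.le
      have hdiff : (∫ s in (0:ℝ)..t, w s) - (∫ s in (0:ℝ)..t, u s)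
          = (∫ s in lo h..t, w s) - (∫ s in lo h..t, u s) := by
        rw [hsplit_w, hsplit_u, prefixEq h hhk.le]; ring
      rw [hdiff]
      have hsplitconst : (δ + a) * T / k = δ * (T / k) + a * (T / k) := by ring
      rw [abs_le]
      constructor <;> linarith
  exact ⟨part1, part2, part3, part4, part5⟩
end

section
/- Let T > 0, δ > 0, a > δ, and fix an integer k ≥ 1. For a piecewise constant function u : [0,T] → [0,δ], define w_u : [0,T) → ℝ by w_u(t) = a if t ∈ [(h+1)T/k − U_h(u)/a, (h+1)T/k) for some h ∈ {0,…,k−1}, where U_h(u) = ∫_{hT/k}^{(h+1)T/k} u(s) ds, and w_u(t) = 0 otherwise. Then for any two piecewise constant functions u, u' : [0,T] → [0,δ] one has ∫_0^T |w_u(s) − w_{u'}(s)| ds ≤ ∫_0^T |u(s) − u'(s)| ds; in particular, the map u ↦ w_u is 1-Lipschitz, hence continuous, for the L¹ topology. -/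
open scoped Classical

/-- The bang-bang approximation `w_u` of a control `u` on the uniform partition of `[0,T)`
into `k` pieces: on each piece `I_h = [hT/k, (h+1)T/k)` it equals `a` on the final
subinterval of length `U_h(u)/a`, where `U_h(u) = ∫_{I_h} u`, and `0` elsewhere. -/
noncomputable def bangBang (T a : ℝ) (k : ℕ) (u : ℝ → ℝ) : ℝ → ℝ := fun t =>
  if ∃ h : ℕ, h < k ∧
      ((h : ℝ) + 1) * T / k - (∫ s in ((h : ℝ) * T / k)..(((h : ℝ) + 1) * T / k), u s) / a ≤ t ∧
      t < ((h : ℝ) + 1) * T / k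
  then a else 0

/-- a.e. statements that fail at most at one point. -/
lemma ae_of_all_but_one {P : ℝ → Prop} (y : ℝ) (h : ∀ x, x ≠ y → P x) :
    ∀ᵐ x ∂(MeasureTheory.volume : MeasureTheory.Measure ℝ), P x := by
  rw [MeasureTheory.ae_iff]
  refine MeasureTheory.measure_mono_null (t := {y}) (fun x hx => ?_) Real.volume_singleton
  simp only [Set.mem_setOf_eq] at hx
  simp only [Set.mem_singleton_iff]
  by_contra hxy
  exact hx (h x hxy)

/-- A piecewise constant function is interval integrable on `[0,T]`. -/
lemma PiecewiseConstOn.intervalIntegrable {f : ℝ → ℝ} {T : ℝ}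
    (h : PiecewiseConstOn f T) : IntervalIntegrable f MeasureTheory.volume 0 T := by
  obtain ⟨m, t, hm, ht0, htm, hmono, hconst⟩ := h
  have key : ∀ j, j ≤ m → IntervalIntegrable f MeasureTheory.volume (t 0) (t j) := by
    intro j
    induction j with
    | zero => intro _; exact IntervalIntegrable.refl
    | succ j ih =>
      intro hjm
      have hj : j < m := hjm
      refine (ih hj.le).trans ?_
      refine (intervalIntegrable_const (c := f (t j))).congr_ae ?_
      rw [Filter.EventuallyEq, MeasureTheory.ae_restrict_iff' measurableSet_uIoc]
      refine ae_of_all_but_one (t (j + 1)) (fun x hx hxI => ?_)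
      rw [Set.uIoc_of_le (hmono j hj).le] at hxI
      exact (hconst j hj x ⟨hxI.1.le, lt_of_le_of_ne hxI.2 hx⟩).symm
  have := key m le_rfl
  rwa [ht0, htm] at this

/-- Step functions are interval integrable. -/
lemma step_intervalIntegrable (A m M x y : ℝ) :
    IntervalIntegrable (fun t => if m ≤ t ∧ t < M then A else 0) MeasureTheory.volume x y := by
  have hfe : (fun t => if m ≤ t ∧ t < M then A else 0)
      = Set.indicator (Set.Ico m M) (fun _ => A) := by
    funext t
    simp [Set.indicator, Set.mem_Ico]
  rw [hfe, intervalIntegrable_iff]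
  exact (MeasureTheory.integrableOn_const
    measure_Ioc_lt_top.ne).indicator measurableSet_Ico

/-- Integral of a step function. -/
lemma integral_step (A p q m M : ℝ) (hpm : p ≤ m) (hmM : m ≤ M) (hMq : M ≤ q) :
    ∫ t in p..q, (if m ≤ t ∧ t < M then A else 0) = A * (M - m) := by
  have hint := step_intervalIntegrable A m M
  have h1 : ∫ t in p..m, (if m ≤ t ∧ t < M then A else 0) = 0 := by
    rw [intervalIntegral.integral_congr_ae (g := fun _ => (0:ℝ)), intervalIntegral.integral_const,
      smul_zero]
    refine ae_of_all_but_one m (fun x hx hxI => ?_)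
    rw [Set.uIoc_of_le hpm] at hxI
    rw [if_neg]
    rintro ⟨hmx, -⟩
    exact hx (le_antisymm hxI.2 hmx)
  have h2 : ∫ t in m..M, (if m ≤ t ∧ t < M then A else 0) = A * (M - m) := by
    rw [intervalIntegral.integral_congr_ae (g := fun _ => A), intervalIntegral.integral_const,
      smul_eq_mul, mul_comm]
    refine ae_of_all_but_one M (fun x hx hxI => ?_)
    rw [Set.uIoc_of_le hmM] at hxI
    rw [if_pos ⟨hxI.1.le, lt_of_le_of_ne hxI.2 hx⟩]
  have h3 : ∫ t in M..q, (if m ≤ t ∧ t < M then A else 0) = 0 := by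
    rw [intervalIntegral.integral_congr_ae (g := fun _ => (0:ℝ)), intervalIntegral.integral_const,
      smul_zero]
    refine ae_of_all_but_one M (fun x _ hxI => ?_)
    rw [Set.uIoc_of_le hMq] at hxI
    rw [if_neg]
    rintro ⟨-, hxM⟩
    exact absurd hxI.1 (not_lt.mpr hxM.le)
  rw [← intervalIntegral.integral_add_adjacent_intervals (hint p m) (hint m q),
    ← intervalIntegral.integral_add_adjacent_intervals (hint m M) (hint M q), h1, h2, h3]
  ring

/-- the map `u ↦ w_u` is `1`-Lipschitz for the `L¹` topology. -/
theorem bangBang_lipschitz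
    (T δ a : ℝ) (hT : 0 < T) (hδ : 0 < δ) (ha : δ < a)
    (k : ℕ) (hk : 1 ≤ k)
    (u u' : ℝ → ℝ)
    (hu : PiecewiseConstOn u T) (hu' : PiecewiseConstOn u' T)
    (hurange : ∀ t ∈ Set.Icc (0 : ℝ) T, u t ∈ Set.Icc (0 : ℝ) δ)
    (hu'range : ∀ t ∈ Set.Icc (0 : ℝ) T, u' t ∈ Set.Icc (0 : ℝ) δ) :
    (∫ s in (0 : ℝ)..T, |bangBang T a k u s - bangBang T a k u' s|) ≤
      ∫ s in (0 : ℝ)..T, |u s - u' s| := by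
  have ha0 : (0:ℝ) < a := hδ.trans ha
  have hk0 : (0:ℝ) < (k:ℝ) := by exact_mod_cast hk
  set b : ℕ → ℝ := fun j => (j : ℝ) * T / k with hb
  have hbmono : StrictMono b := by
    intro i j hij
    have hij' : (i:ℝ) < j := by exact_mod_cast hij
    simp only [hb]
    gcongr
  have hb0 : b 0 = 0 := by simp [hb]
  have hbk : b k = T := by simp only [hb]; field_simp
  have hbdiff : ∀ h : ℕ, b (h+1) - b h = T / k := by
    intro h; simp only [hb]; push_cast; ring
  have hble : ∀ h : ℕ, b h ≤ b (h+1) := fun h => (hbmono (Nat.lt_succ_self h)).le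
  have hcast1 : ∀ h : ℕ, ((h:ℝ) + 1) * T / (k:ℝ) = b (h+1) := by
    intro h; simp only [hb]; push_cast; ring
  have hcast0 : ∀ h : ℕ, (h:ℝ) * T / (k:ℝ) = b h := by intro h; simp [hb]
  have hsub : ∀ h : ℕ, h < k → Set.Icc (b h) (b (h+1)) ⊆ Set.Icc (0:ℝ) T := by
    intro h hh x hx
    constructor
    · calc (0:ℝ) = b 0 := hb0.symm
        _ ≤ b h := hbmono.monotone (Nat.zero_le h)
        _ ≤ x := hx.1
    · calc x ≤ b (h+1) := hx.2
        _ ≤ b k := hbmono.monotone hh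
        _ = T := hbk
  have hui : ∀ h : ℕ, h < k → IntervalIntegrable u MeasureTheory.volume (b h) (b (h+1)) := by
    intro h hh
    refine hu.intervalIntegrable.mono_set ?_
    rw [Set.uIcc_of_le (hble h), Set.uIcc_of_le hT.le]
    exact hsub h hh
  have hu'i : ∀ h : ℕ, h < k → IntervalIntegrable u' MeasureTheory.volume (b h) (b (h+1)) := by
    intro h hh
    refine hu'.intervalIntegrable.mono_set ?_
    rw [Set.uIcc_of_le (hble h), Set.uIcc_of_le hT.le]
    exact hsub h hh
  set U : ℕ → ℝ := fun h => ∫ s in (b h)..(b (h+1)), u s with hU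
  set U' : ℕ → ℝ := fun h => ∫ s in (b h)..(b (h+1)), u' s with hU'
  set c : ℕ → ℝ := fun h => b (h+1) - U h / a with hc
  set c' : ℕ → ℝ := fun h => b (h+1) - U' h / a with hc'
  have key : ∀ (v : ℝ → ℝ), (∀ t ∈ Set.Icc (0:ℝ) T, v t ∈ Set.Icc (0:ℝ) δ) →
      (∀ h : ℕ, h < k → IntervalIntegrable v MeasureTheory.volume (b h) (b (h+1))) →
      ∀ h : ℕ, h < k → 0 ≤ (∫ s in (b h)..(b (h+1)), v s) ∧
        (∫ s in (b h)..(b (h+1)), v s) ≤ δ * (T / k) := by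
    intro v hvr hvi h hh
    have hmem : ∀ x ∈ Set.Icc (b h) (b (h+1)), v x ∈ Set.Icc (0:ℝ) δ :=
      fun x hx => hvr x (hsub h hh hx)
    constructor
    · exact intervalIntegral.integral_nonneg (hble h) (fun x hx => (hmem x hx).1)
    · calc (∫ s in (b h)..(b (h+1)), v s) ≤ ∫ _ in (b h)..(b (h+1)), δ :=
          intervalIntegral.integral_mono_on (hble h) (hvi h hh) intervalIntegrable_const
            (fun x hx => (hmem x hx).2)
        _ = δ * (T / k) := by
          rw [intervalIntegral.integral_const, smul_eq_mul, hbdiff h, mul_comm]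
  have hcgen : ∀ (V : ℝ) , 0 ≤ V → V ≤ δ * (T / k) →
      ∀ h : ℕ, b h < b (h+1) - V / a ∧ b (h+1) - V / a ≤ b (h+1) := by
    intro V h0 h1 h
    have hTk : (0:ℝ) < T / k := div_pos hT hk0
    have hVa : V / a < T / k := by
      rw [div_lt_iff₀ ha0]
      nlinarith
    have hVa0 : 0 ≤ V / a := div_nonneg h0 ha0.le
    have := hbdiff h
    constructor <;> linarith
  have hcb : ∀ h : ℕ, h < k → b h < c h ∧ c h ≤ b (h+1) := by
    intro h hh
    obtain ⟨h0, h1⟩ := key u hurange hui h hh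
    exact hcgen (U h) h0 h1 h
  have hc'b : ∀ h : ℕ, h < k → b h < c' h ∧ c' h ≤ b (h+1) := by
    intro h hh
    obtain ⟨h0, h1⟩ := key u' hu'range hu'i h hh
    exact hcgen (U' h) h0 h1 h
  -- pointwise description of bangBang on each piece
  have hWgen : ∀ (v : ℝ → ℝ) (cv : ℕ → ℝ),
      (∀ h : ℕ, cv h = b (h+1) - (∫ s in (b h)..(b (h+1)), v s) / a) →
      (∀ h' : ℕ, h' < k → b h' < cv h') →
      ∀ h : ℕ, h < k → ∀ t ∈ Set.Ico (b h) (b (h+1)),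
        bangBang T a k v t = if cv h ≤ t then a else 0 := by
    intro v cv hcv hsmall h hh t ht
    simp only [bangBang, hcast1, hcast0, ← hcv]
    by_cases hex : ∃ h' : ℕ, h' < k ∧ cv h' ≤ t ∧ t < b (h'+1)
    · rw [if_pos hex]
      obtain ⟨h', hh'k, h1, h2⟩ := hex
      have hlt : b h' < t := lt_of_lt_of_le (hsmall h' hh'k) h1
      have hhe : h' = h := by
        by_contra hne
        rcases Nat.lt_or_ge h' h with hlt' | hge
        · have : t < b h := lt_of_lt_of_le h2 (hbmono.monotone hlt')
          exact absurd ht.1 (not_le.mpr this)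
        · have hgt : h < h' := lt_of_le_of_ne hge (Ne.symm hne)
          have : b (h+1) ≤ b h' := hbmono.monotone hgt
          exact absurd (ht.2.trans_le this) (not_lt.mpr hlt.le)
      subst hhe
      rw [if_pos h1]
    · rw [if_neg hex, if_neg]
      intro hle
      exact hex ⟨h, hh, hle, ht.2⟩
  have hWu : ∀ h : ℕ, h < k → ∀ t ∈ Set.Ico (b h) (b (h+1)),
      bangBang T a k u t = if c h ≤ t then a else 0 :=
    hWgen u c (fun h => by simp only [hc, hU]) (fun h' hh' => (hcb h' hh').1)
  have hWu' : ∀ h : ℕ, h < k → ∀ t ∈ Set.Ico (b h) (b (h+1)),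
      bangBang T a k u' t = if c' h ≤ t then a else 0 :=
    hWgen u' c' (fun h => by simp only [hc', hU']) (fun h' hh' => (hc'b h' hh').1)
  -- the per-piece integral of the bang-bang difference
  have hWint : ∀ h : ℕ, h < k →
      IntervalIntegrable (fun t => |bangBang T a k u t - bangBang T a k u' t|)
        MeasureTheory.volume (b h) (b (h+1)) ∧
      (∫ t in (b h)..(b (h+1)), |bangBang T a k u t - bangBang T a k u' t|)
        = |U h - U' h| := by
    intro h hh
    set m := min (c h) (c' h) with hm
    set M := max (c h) (c' h) with hM
    have hbm : b h ≤ m := le_min (hcb h hh).1.le (hc'b h hh).1.le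
    have hmM : m ≤ M := min_le_max
    have hMb : M ≤ b (h+1) := max_le (hcb h hh).2 (hc'b h hh).2
    have heq : ∀ t ∈ Set.Ico (b h) (b (h+1)),
        |bangBang T a k u t - bangBang T a k u' t|
          = if m ≤ t ∧ t < M then a else 0 := by
      intro t ht
      rw [hWu h hh t ht, hWu' h hh t ht]
      rcases le_or_gt (c h) t with h1 | h1 <;> rcases le_or_gt (c' h) t with h2 | h2
      · have hcond : ¬ (m ≤ t ∧ t < M) := fun hco => absurd hco.2 (not_lt.mpr (max_le h1 h2))
        rw [if_pos h1, if_pos h2, if_neg hcond]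
        simp
      · have hcond : m ≤ t ∧ t < M := ⟨(min_le_left _ _).trans h1, h2.trans_le (le_max_right _ _)⟩
        rw [if_pos h1, if_neg (not_le.mpr h2), if_pos hcond, sub_zero, abs_of_pos ha0]
      · have hcond : m ≤ t ∧ t < M := ⟨(min_le_right _ _).trans h2, h1.trans_le (le_max_left _ _)⟩
        rw [if_neg (not_le.mpr h1), if_pos h2, if_pos hcond, zero_sub, abs_neg, abs_of_pos ha0]
      · have hcond : ¬ (m ≤ t ∧ t < M) := fun hco => absurd hco.1 (not_le.mpr (lt_min h1 h2))
        rw [if_neg (not_le.mpr h1), if_neg (not_le.mpr h2), if_neg hcond]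
        simp
    have hae : ∀ᵐ x ∂(MeasureTheory.volume : MeasureTheory.Measure ℝ),
        x ∈ Set.uIoc (b h) (b (h+1)) →
        |bangBang T a k u x - bangBang T a k u' x| = if m ≤ x ∧ x < M then a else 0 := by
      refine ae_of_all_but_one (b (h+1)) (fun x hx hxI => ?_)
      rw [Set.uIoc_of_le (hble h)] at hxI
      exact heq x ⟨hxI.1.le, lt_of_le_of_ne hxI.2 hx⟩
    constructor
    · have hEE : (fun t => |bangBang T a k u t - bangBang T a k u' t|)
          =ᵐ[MeasureTheory.volume.restrict (Set.uIoc (b h) (b (h+1)))]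
          (fun t => if m ≤ t ∧ t < M then a else 0) := by
        rw [Filter.EventuallyEq, MeasureTheory.ae_restrict_iff' measurableSet_uIoc]
        exact hae
      exact (step_intervalIntegrable a m M (b h) (b (h+1))).congr_ae hEE.symm
    · rw [intervalIntegral.integral_congr_ae hae,
        integral_step a (b h) (b (h+1)) m M hbm hmM hMb]
      have h1 : M - m = |c' h - c h| := max_sub_min_eq_abs _ _
      have h2 : c' h - c h = (U h - U' h) / a := by
        simp only [hc, hc']
        ring
      rw [h1, h2, abs_div, abs_of_pos ha0]
      field_simp
  have hL : (∫ s in (0:ℝ)..T, |bangBang T a k u s - bangBang T a k u' s|)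
      = ∑ h ∈ Finset.range k, |U h - U' h| := by
    have hsum := intervalIntegral.sum_integral_adjacent_intervals
      (f := fun s => |bangBang T a k u s - bangBang T a k u' s|)
      (μ := MeasureTheory.volume) (a := b) (n := k) (fun h hh => (hWint h hh).1)
    rw [hb0, hbk] at hsum
    rw [← hsum]
    exact Finset.sum_congr rfl (fun h hh => (hWint h (Finset.mem_range.mp hh)).2)
  have hR : (∫ s in (0:ℝ)..T, |u s - u' s|)
      = ∑ h ∈ Finset.range k, ∫ s in (b h)..(b (h+1)), |u s - u' s| := by
    have hsum := intervalIntegral.sum_integral_adjacent_intervals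
      (f := fun s => |u s - u' s|) (μ := MeasureTheory.volume) (a := b) (n := k)
      (fun h hh => ((hui h hh).sub (hu'i h hh)).abs)
    rw [hb0, hbk] at hsum
    exact hsum.symm
  rw [hL, hR]
  refine Finset.sum_le_sum (fun h hh => ?_)
  have hh' := Finset.mem_range.mp hh
  have hsub' : U h - U' h = ∫ s in (b h)..(b (h+1)), (u s - u' s) :=
    (intervalIntegral.integral_sub (hui h hh') (hu'i h hh')).symm
  rw [hsub']
  exact intervalIntegral.abs_integral_le_integral_abs (hble h)
end

section
/- Fix a sequence of real numbers (λ_k)_{k≥1} and a family b : ℕ×ℕ → ℂ. Fix n ∈ ℕ, set A^{(n)} = −i·H0^{(n)} and B^{(n)} = −i·(H1^{(n)} − H0^{(n)}), let Σ_n = {|λ_l − λ_k| : 1 ≤ l,k ≤ n} and Ξ_n = {σ ∈ Σ_n : b(k,l) = 0 for all k ≤ n < l with |λ_l − λ_k| = σ}, and assume 0 ∈ Ξ_n. Define W_n = {A^{(n)}} ∪ {E_0(B^{(n)})} ∪ {E_0(B^{(n)}) + ν·E_σ(B^{(n)}) : σ ∈ Ξ_n, σ ≠ 0, ν ∈ (−1/2,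 1/2)} and V_n = {A^{(n)}} ∪ {E_σ(B^{(n)}) : σ ∈ Ξ_n}. Then the smallest real Lie subalgebra of the n×n complex matrices containing W_n equals the smallest real Lie subalgebra containing V_n. -/
open scoped Classical

attribute [local instance 100] LieRing.ofAssociativeRing

/-- `H0^{(n)}` : the `n×n` diagonal matrix `diag(λ_1, …, λ_n)`. -/
noncomputable def H0mat (lam : ℕ → ℝ) (n : ℕ) : Matrix (Fin n) (Fin n) ℂ :=
  Matrix.diagonal fun k => (lam ((k : ℕ) + 1) : ℂ)

/-- `H1^{(n)}` : the `n×n` matrix with `(l,k)`-entry `b l k` for `1 ≤ l,k ≤ n`. -/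
noncomputable def H1mat (b : ℕ → ℕ → ℂ) (n : ℕ) : Matrix (Fin n) (Fin n) ℂ :=
  fun l k => b ((l : ℕ) + 1) ((k : ℕ) + 1)

/-- `E_σ(M)` : the matrix obtained from `M` by keeping the `(l,k)`-entries with
`|λ_l - λ_k| = σ` and setting the other entries to `0`. -/
noncomputable def Esel (lam : ℕ → ℝ) (σ : ℝ) {n : ℕ} (M : Matrix (Fin n) (Fin n) ℂ) :
    Matrix (Fin n) (Fin n) ℂ :=
  fun l k => if |lam ((l : ℕ) + 1) - lam ((k : ℕ) + 1)| = σ then M l k else 0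

/-- `Σ_n` : the set of spectral gaps associated with the first `n` eigenvalues. -/
def Sigma_n (lam : ℕ → ℝ) (n : ℕ) : Set ℝ :=
  {σ : ℝ | ∃ l k : ℕ, 1 ≤ l ∧ l ≤ n ∧ 1 ≤ k ∧ k ≤ n ∧ σ = |lam l - lam k|}

/-- `Ξ_n` : the set of spectral gaps `σ ∈ Σ_n` for which there is no coupling through
the gap `σ` between the first `n` levels and the higher levels. -/
def Xi_n (lam : ℕ → ℝ) (b : ℕ → ℕ → ℂ) (n : ℕ) : Set ℝ :=
  {σ ∈ Sigma_n lam n |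
    ∀ k l : ℕ, 1 ≤ k → k ≤ n → n < l → |lam l - lam k| = σ → b k l = 0}

/-- the real Lie algebra generated by
`W_n = {A^{(n)}} ∪ {E_0(B^{(n)})} ∪ {E_0(B^{(n)}) + ν E_σ(B^{(n)}) : σ ∈ Ξ_n, σ ≠ 0, |ν| < 1/2}`
equals the real Lie algebra generated by `V_n = {A^{(n)}} ∪ {E_σ(B^{(n)}) : σ ∈ Ξ_n}`,
provided `0 ∈ Ξ_n`. -/
theorem lieSpan_W_eq_lieSpan_V
    (lam : ℕ → ℝ) (b : ℕ → ℕ → ℂ) (n : ℕ)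
    (A B : Matrix (Fin n) (Fin n) ℂ)
    (hA : A = (-Complex.I) • H0mat lam n)
    (hB : B = (-Complex.I) • (H1mat b n - H0mat lam n))
    (h0 : (0 : ℝ) ∈ Xi_n lam b n) :
    LieSubalgebra.lieSpan ℝ (Matrix (Fin n) (Fin n) ℂ)
        ({A} ∪ {Esel lam 0 B} ∪
          {M | ∃ σ ∈ Xi_n lam b n, σ ≠ 0 ∧
            ∃ ν ∈ Set.Ioo (-(1 / 2) : ℝ) (1 / 2),
              M = Esel lam 0 B + ν • Esel lam σ B}) =
      LieSubalgebra.lieSpan ℝ (Matrix (Fin n) (Fin n) ℂ)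
        ({A} ∪ {M | ∃ σ ∈ Xi_n lam b n, M = Esel lam σ B}) := by
  apply le_antisymm
  · rw [LieSubalgebra.lieSpan_le]
    have hE0 : Esel lam 0 B ∈
        LieSubalgebra.lieSpan ℝ (Matrix (Fin n) (Fin n) ℂ)
          ({A} ∪ {M | ∃ σ ∈ Xi_n lam b n, M = Esel lam σ B}) :=
      LieSubalgebra.subset_lieSpan (Or.inr ⟨0, h0, rfl⟩)
    rintro M (((rfl : M = A) | (rfl : M = Esel lam 0 B)) | ⟨σ, hσ, -, ν, -, rfl⟩)
    · exact LieSubalgebra.subset_lieSpan (Or.inl rfl)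
    · exact hE0
    · exact add_mem hE0 (LieSubalgebra.smul_mem _ ν
        (LieSubalgebra.subset_lieSpan (Or.inr ⟨σ, hσ, rfl⟩)))
  · rw [LieSubalgebra.lieSpan_le]
    have hE0 : Esel lam 0 B ∈
        LieSubalgebra.lieSpan ℝ (Matrix (Fin n) (Fin n) ℂ)
          ({A} ∪ {Esel lam 0 B} ∪
            {M | ∃ σ ∈ Xi_n lam b n, σ ≠ 0 ∧
              ∃ ν ∈ Set.Ioo (-(1 / 2) : ℝ) (1 / 2),
                M = Esel lam 0 B + ν • Esel lam σ B}) :=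
      LieSubalgebra.subset_lieSpan (Or.inl (Or.inr rfl))
    rintro M ((rfl : M = A) | ⟨σ, hσ, rfl⟩)
    · exact LieSubalgebra.subset_lieSpan (Or.inl (Or.inl rfl))
    · by_cases hσ0 : σ = 0
      · subst hσ0; exact hE0
      · have h14 : Esel lam 0 B + ((1/4 : ℝ)) • Esel lam σ B ∈
            LieSubalgebra.lieSpan ℝ (Matrix (Fin n) (Fin n) ℂ)
              ({A} ∪ {Esel lam 0 B} ∪
                {M | ∃ σ ∈ Xi_n lam b n, σ ≠ 0 ∧
                  ∃ ν ∈ Set.Ioo (-(1 / 2) : ℝ) (1 / 2),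
                    M = Esel lam 0 B + ν • Esel lam σ B}) :=
          LieSubalgebra.subset_lieSpan
            (Or.inr ⟨σ, hσ, hσ0, 1/4, ⟨by norm_num, by norm_num⟩, rfl⟩)
        have key : Esel lam σ B =
            (4 : ℝ) • ((Esel lam 0 B + (1/4 : ℝ) • Esel lam σ B) - Esel lam 0 B) := by
          module
        rw [key]
        exact LieSubalgebra.smul_mem _ (4 : ℝ) (sub_mem h14 hE0)
end
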